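/- Let $0<\alpha<n$, let $\Omega$ be homogeneous of degree zero, bounded and Lipschitz on $\mathbb{S}^{n-1}$, and let $f\in L^1(\mathbb{R}^n)$ be nonnegative, supported in $B(0,1)$, with $\|f\|_{L^1}=1$; set $f_t(y)=t^{-n}f(y/t)$. Then for every $\rho>0$, $\lim_{t\to 0^+}\Big\|M_{\Omega}^{\alpha}f_t(\cdot)-\frac{|\Omega(\cdot)|}{|\cdot|^{n-\alpha}}\Big\|_{L^{n/(n-\alpha),\infty}(\mathbb{R}^n\setminus B(0,\rho))}=0$. -/

import Mathlib

open MeasureTheory Metric Set ENNReal Filter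

noncomputable section

abbrev Eucl (n : ℕ) := EuclideanSpace ℝ (Fin n)

/-- `Ω` is homogeneous of degree zero. -/
def Homog (n : ℕ) (Ω : Eucl n → ℝ) : Prop :=
  ∀ r : ℝ, 0 < r → ∀ x : Eucl n, x ≠ 0 → Ω (r • x) = Ω x

/-- Restricted weak `L^q` quasinorm of an `ℝ≥0∞`-valued function on the set `A`. -/
noncomputable def wnormSet {X : Type*} [MeasurableSpace X] (μ : Measure X) (q : ℝ)
    (A : Set X) (g : X → ℝ≥0∞) : ℝ≥0∞ :=
  ⨆ l : NNReal, (l : ℝ≥0∞) * (μ {x | x ∈ A ∧ (l : ℝ≥0∞) < g x}) ^ (1 / q)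

/-- `∫_{S^{n-1}} |Ω|^q dσ`. -/
noncomputable def sphereLpPow (n : ℕ) (q : ℝ) (Ω : Eucl n → ℝ) : ℝ≥0∞ :=
  ∫⁻ x : Metric.sphere (0 : Eucl n) 1, (‖Ω (x : Eucl n)‖₊ : ℝ≥0∞) ^ q
    ∂((volume : Measure (Eucl n)).toSphere)

/-- `‖Ω‖_{L^q(S^{n-1})}`. -/
noncomputable def sphereLpNorm (n : ℕ) (q : ℝ) (Ω : Eucl n → ℝ) : ℝ≥0∞ :=
  (sphereLpPow n q Ω) ^ (1 / q)

/-- Rough fractional maximal operator. -/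
noncomputable def fracMax (n : ℕ) (α : ℝ) (Ω f : Eucl n → ℝ) (x : Eucl n) : ℝ≥0∞ :=
  ⨆ (r : ℝ) (_ : 0 < r), ENNReal.ofReal (r ^ (α - n)) *
    ∫⁻ y in ball x r, (‖Ω (x - y)‖₊ * ‖f y‖₊ : ℝ≥0∞)

/-- Fractional integral with kernel `|Ω|`, applied to `|f|`. -/
noncomputable def fracIntAbs (n : ℕ) (α : ℝ) (Ω f : Eucl n → ℝ) (x : Eucl n) : ℝ≥0∞ :=
  ∫⁻ y, ((‖Ω (x - y)‖₊ * ‖f y‖₊ : ℝ≥0∞)) / (‖x - y‖₊ : ℝ≥0∞) ^ ((n : ℝ) - α)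

/-- Signed fractional integral. -/
noncomputable def fracInt (n : ℕ) (α : ℝ) (Ω f : Eucl n → ℝ) (x : Eucl n) : ℝ :=
  ∫ y, (Ω (x - y) / ‖x - y‖ ^ ((n : ℝ) - α)) * f y

/-- The `L^1`-normalized dilation `f_t(y) = t^{-n} f(y/t)`. -/
noncomputable def dil (n : ℕ) (t : ℝ) (f : Eucl n → ℝ) : Eucl n → ℝ :=
  fun y => (t ^ n)⁻¹ * f (t⁻¹ • y)

/-- `|a - b|` in `ℝ≥0∞`. -/
noncomputable def ediff (a b : ℝ≥0∞) : ℝ≥0∞ := (a - b) ⊔ (b - a)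


lemma unit_dir_dist {E : Type*} [NormedAddCommGroup E] [NormedSpace ℝ E] {a b : E}
    (ha : a ≠ 0) (hb : b ≠ 0) :
    ‖‖a‖⁻¹ • a - ‖b‖⁻¹ • b‖ ≤ 2 * ‖a - b‖ / ‖a‖ := by
  have h1 : (0:ℝ) < ‖a‖ := norm_pos_iff.mpr ha
  have h2 : (0:ℝ) < ‖b‖ := norm_pos_iff.mpr hb
  have key : ‖a‖⁻¹ • a - ‖b‖⁻¹ • b = ‖a‖⁻¹ • (a - b) + (‖a‖⁻¹ - ‖b‖⁻¹) • b := by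
    rw [smul_sub, sub_smul]; abel
  rw [key]
  refine (norm_add_le _ _).trans ?_
  rw [norm_smul, norm_smul, Real.norm_eq_abs, Real.norm_eq_abs]
  have e1 : |‖a‖⁻¹| = ‖a‖⁻¹ := abs_of_pos (by positivity)
  have e2 : |‖a‖⁻¹ - ‖b‖⁻¹| * ‖b‖ = |‖b‖ - ‖a‖| / ‖a‖ := by
    rw [show ‖a‖⁻¹ - ‖b‖⁻¹ = (‖b‖ - ‖a‖) / (‖a‖ * ‖b‖) by field_simp, abs_div,
      abs_of_pos (by positivity : (0:ℝ) < ‖a‖ * ‖b‖)]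
    field_simp
  rw [e1, e2]
  have e3 : |‖b‖ - ‖a‖| ≤ ‖a - b‖ := by
    rw [abs_sub_comm]; exact abs_norm_sub_norm_le a b
  rw [inv_mul_eq_div, ← add_div]
  apply (div_le_div_iff_of_pos_right h1).mpr
  linarith

lemma unit_mem {E : Type*} [NormedAddCommGroup E] [NormedSpace ℝ E] {a : E} (ha : a ≠ 0) :
    ‖a‖⁻¹ • a ∈ sphere (0 : E) 1 := by
  have h1 : (0:ℝ) < ‖a‖ := norm_pos_iff.mpr ha
  rw [mem_sphere_zero_iff_norm, norm_smul, Real.norm_eq_abs, abs_of_pos (by positivity)]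
  field_simp

lemma homog_unit {n : ℕ} {Ω : Eucl n → ℝ} (hhom : Homog n Ω) {a : Eucl n} (ha : a ≠ 0) :
    Ω a = Ω (‖a‖⁻¹ • a) := by
  have h1 : (0:ℝ) < ‖a‖ := norm_pos_iff.mpr ha
  have h2 : ‖a‖⁻¹ • a ≠ 0 := by
    intro h
    have := unit_mem ha
    rw [h, mem_sphere_zero_iff_norm, norm_zero] at this
    norm_num at this
  have := hhom ‖a‖ h1 (‖a‖⁻¹ • a) h2
  rwa [smul_inv_smul₀ h1.ne'] at this

lemma omega_bound {n : ℕ} {Ω : Eucl n → ℝ} (hhom : Homog n Ω) {B : ℝ}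
    (hB : ∀ u ∈ sphere (0 : Eucl n) 1, |Ω u| ≤ B) {x : Eucl n} (hx : x ≠ 0) : |Ω x| ≤ B := by
  rw [homog_unit hhom hx]
  exact hB _ (unit_mem hx)

lemma omega_lip {n : ℕ} {Ω : Eucl n → ℝ} (hhom : Homog n Ω) {L : ℝ}
    (hL : ∀ u ∈ sphere (0 : Eucl n) 1, ∀ v ∈ sphere (0 : Eucl n) 1,
      |Ω u - Ω v| ≤ L * ‖u - v‖) (hL0 : 0 ≤ L)
    {x y : Eucl n} (hx : x ≠ 0) (hxy : x - y ≠ 0) :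
    |Ω (x - y) - Ω x| ≤ L * (2 * ‖y‖ / ‖x‖) := by
  rw [homog_unit hhom hxy, homog_unit hhom hx]
  refine (hL _ (unit_mem hxy) _ (unit_mem hx)).trans ?_
  apply mul_le_mul_of_nonneg_left ?_ hL0
  rw [norm_sub_rev]
  have := unit_dir_dist hx hxy
  simpa using this

lemma dil_support {n : ℕ} {t : ℝ} (ht : 0 < t) {f : Eucl n → ℝ}
    (hsupp : Function.support f ⊆ closedBall (0 : Eucl n) 1) :
    Function.support (dil n t f) ⊆ closedBall (0 : Eucl n) t := by
  intro y hy
  have hf : f (t⁻¹ • y) ≠ 0 := by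
    intro h; apply hy; simp [dil, h]
  have := hsupp hf
  rw [mem_closedBall_zero_iff] at this ⊢
  rw [norm_smul, Real.norm_eq_abs, abs_of_pos (by positivity)] at this
  calc ‖y‖ = t * (t⁻¹ * ‖y‖) := by field_simp
  _ ≤ t * 1 := by exact mul_le_mul_of_nonneg_left this ht.le
  _ = t := mul_one t

lemma dil_mass {n : ℕ} {t : ℝ} (ht : 0 < t) {f : Eucl n → ℝ}
    (hf : Integrable f) (hpos : ∀ y, 0 ≤ f y) (hnorm : (∫ y, f y) = 1) :
    ∫⁻ y, (‖dil n t f y‖₊ : ℝ≥0∞) = 1 := by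
  have htn : (0:ℝ) < t ^ n := pow_pos ht n
  have step1 : ∀ y, (‖dil n t f y‖₊ : ℝ≥0∞)
      = ENNReal.ofReal ((t ^ n)⁻¹) * ENNReal.ofReal (f (t⁻¹ • y)) := by
    intro y
    rw [← enorm_eq_nnnorm, ← ofReal_norm, Real.norm_eq_abs, dil,
      abs_of_nonneg (mul_nonneg (by positivity) (hpos _)), ENNReal.ofReal_mul (by positivity)]
  simp only [step1]
  rw [lintegral_const_mul' _ _ ENNReal.ofReal_ne_top]
  have hmap := Measure.map_addHaar_smul (volume : Measure (Eucl n))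
    (show t⁻¹ ≠ 0 from inv_ne_zero ht.ne')
  have hrank : Module.finrank ℝ (Eucl n) = n := finrank_euclideanSpace_fin
  rw [hrank] at hmap
  have habs : |((t⁻¹ : ℝ) ^ n)⁻¹| = t ^ n := by
    rw [← inv_pow, inv_inv, abs_of_pos htn]
  rw [habs] at hmap
  have hgm : AEMeasurable (fun z : Eucl n => ENNReal.ofReal (f z))
      (Measure.map (t⁻¹ • · : Eucl n → Eucl n) volume) := by
    rw [hmap]
    exact (ENNReal.measurable_ofReal.comp_aemeasurable hf.aemeasurable).smul_measure _
  have step2 : ∫⁻ y, ENNReal.ofReal (f (t⁻¹ • y))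
      = ENNReal.ofReal (t ^ n) * ∫⁻ y, ENNReal.ofReal (f y) := by
    rw [← lintegral_map' hgm ((measurable_const_smul t⁻¹).aemeasurable), hmap,
      lintegral_smul_measure, smul_eq_mul]
  rw [step2, ← ofReal_integral_eq_lintegral_ofReal hf (ae_of_all _ hpos), hnorm,
    ENNReal.ofReal_one, mul_one, ← ENNReal.ofReal_mul (by positivity),
    inv_mul_cancel₀ htn.ne', ENNReal.ofReal_one]

lemma omega_near {n : ℕ} {Ω : Eucl n → ℝ} (hhom : Homog n Ω) {L : ℝ}
    (hL : ∀ u ∈ sphere (0 : Eucl n) 1, ∀ v ∈ sphere (0 : Eucl n) 1,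
      |Ω u - Ω v| ≤ L * ‖u - v‖) (hL0 : 0 ≤ L)
    {ρ t : ℝ} (hρ : 0 < ρ) (ht : 0 < t) (htρ : t ≤ ρ / 2)
    {x y : Eucl n} (hx : ρ ≤ ‖x‖) (hy : ‖y‖ ≤ t) :
    |Ω (x - y) - Ω x| ≤ 2 * L * t / ρ := by
  have hx0 : x ≠ 0 := by
    intro h; rw [h, norm_zero] at hx; linarith
  have hxy : x - y ≠ 0 := by
    intro h
    have h1 : ‖x‖ - ‖y‖ ≤ ‖x - y‖ := norm_sub_norm_le x y
    rw [h, norm_zero] at h1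
    linarith
  refine (omega_lip hhom hL hL0 hx0 hxy).trans ?_
  have hdiv : ‖y‖ / ‖x‖ ≤ t / ρ := div_le_div₀ ht.le hy hρ hx
  calc L * (2 * ‖y‖ / ‖x‖) = 2 * L * (‖y‖ / ‖x‖) := by ring
  _ ≤ 2 * L * (t / ρ) := mul_le_mul_of_nonneg_left hdiv (by positivity)
  _ = 2 * L * t / ρ := by ring

lemma dil_norm_le {n : ℕ} {t : ℝ} (ht : 0 < t) {f : Eucl n → ℝ}
    (hsupp : Function.support f ⊆ closedBall (0 : Eucl n) 1)
    {y : Eucl n} (hy : dil n t f y ≠ 0) : ‖y‖ ≤ t := by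
  have := dil_support ht hsupp (Function.mem_support.mpr hy)
  rwa [mem_closedBall_zero_iff] at this

lemma fracMax_upper {n : ℕ} {α : ℝ} (hαn : α ≤ n) {Ω : Eucl n → ℝ} (hhom : Homog n Ω)
    {B L : ℝ}
    (hB : ∀ u ∈ sphere (0 : Eucl n) 1, |Ω u| ≤ B)
    (hL : ∀ u ∈ sphere (0 : Eucl n) 1, ∀ v ∈ sphere (0 : Eucl n) 1,
      |Ω u - Ω v| ≤ L * ‖u - v‖) (hL0 : 0 ≤ L)
    {f : Eucl n → ℝ} (hf : Integrable f) (hpos : ∀ y, 0 ≤ f y)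
    (hsupp : Function.support f ⊆ closedBall (0 : Eucl n) 1)
    (hnorm : (∫ y, f y) = 1)
    {ρ t : ℝ} (hρ : 0 < ρ) (ht : 0 < t) (htρ : t ≤ ρ / 2)
    {x : Eucl n} (hx : ρ ≤ ‖x‖) :
    fracMax n α Ω (dil n t f) x
      ≤ ENNReal.ofReal ((‖x‖ - t) ^ (α - n) * (|Ω x| + 2 * L * t / ρ)) := by
  have hxt : 0 < ‖x‖ - t := by linarith
  refine iSup_le fun r => iSup_le fun hr => ?_
  by_cases hI : (∫⁻ y in ball x r, (‖Ω (x - y)‖₊ * ‖dil n t f y‖₊ : ℝ≥0∞)) = 0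
  · rw [hI, mul_zero]; exact zero_le
  have hrt : ‖x‖ - t < r := by
    by_contra hcon
    push_neg at hcon
    apply hI
    have hz : ∀ y ∈ ball x r, (‖Ω (x - y)‖₊ * ‖dil n t f y‖₊ : ℝ≥0∞) = 0 := by
      intro y hyb
      have h1 : ‖x - y‖ < r := by
        rw [mem_ball, dist_comm, dist_eq_norm] at hyb; exact hyb
      have h2 : t < ‖y‖ := by
        have := norm_sub_norm_le x y
        have h3 : ‖x‖ - ‖x - y‖ ≤ ‖y‖ := by
          have := norm_sub_norm_le x (x - y)
          simpa using this
        linarith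
      have hd : dil n t f y = 0 := by
        by_contra hne
        exact absurd (dil_norm_le ht hsupp hne) (not_le.mpr h2)
      simp [hd]
    rw [setLIntegral_congr_fun (g := fun _ => 0) measurableSet_ball hz]
    simp
  have hpt : ∀ y : Eucl n, (‖Ω (x - y)‖₊ * ‖dil n t f y‖₊ : ℝ≥0∞)
      ≤ ENNReal.ofReal (|Ω x| + 2 * L * t / ρ) * (‖dil n t f y‖₊ : ℝ≥0∞) := by
    intro y
    by_cases hy : dil n t f y = 0
    · simp [hy]
    refine mul_le_mul_left ?_ _
    rw [← enorm_eq_nnnorm, ← ofReal_norm, Real.norm_eq_abs]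
    apply ENNReal.ofReal_le_ofReal
    have h1 := omega_near hhom hL hL0 hρ ht htρ hx (dil_norm_le ht hsupp hy)
    have h2 := abs_sub_abs_le_abs_sub (Ω (x - y)) (Ω x)
    linarith
  calc ENNReal.ofReal (r ^ (α - n)) * ∫⁻ y in ball x r, (‖Ω (x - y)‖₊ * ‖dil n t f y‖₊ : ℝ≥0∞)
      ≤ ENNReal.ofReal ((‖x‖ - t) ^ (α - n)) *
        (ENNReal.ofReal (|Ω x| + 2 * L * t / ρ) * ∫⁻ y, (‖dil n t f y‖₊ : ℝ≥0∞)) := by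
        refine mul_le_mul' (ENNReal.ofReal_le_ofReal
          (Real.rpow_le_rpow_of_nonpos hxt hrt.le (by linarith))) ?_
        refine (setLIntegral_le_lintegral _ _).trans ?_
        rw [← lintegral_const_mul' _ _ ENNReal.ofReal_ne_top]
        exact lintegral_mono hpt
  _ = ENNReal.ofReal ((‖x‖ - t) ^ (α - n) * (|Ω x| + 2 * L * t / ρ)) := by
        rw [dil_mass ht hf hpos hnorm, mul_one,
          ← ENNReal.ofReal_mul (Real.rpow_nonneg hxt.le _)]

lemma fracMax_lower {n : ℕ} {α : ℝ} {Ω : Eucl n → ℝ} (hhom : Homog n Ω)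
    {L : ℝ}
    (hL : ∀ u ∈ sphere (0 : Eucl n) 1, ∀ v ∈ sphere (0 : Eucl n) 1,
      |Ω u - Ω v| ≤ L * ‖u - v‖) (hL0 : 0 ≤ L)
    {f : Eucl n → ℝ} (hf : Integrable f) (hpos : ∀ y, 0 ≤ f y)
    (hsupp : Function.support f ⊆ closedBall (0 : Eucl n) 1)
    (hnorm : (∫ y, f y) = 1)
    {ρ t : ℝ} (hρ : 0 < ρ) (ht : 0 < t) (htρ : t ≤ ρ / 2)
    {x : Eucl n} (hx : ρ ≤ ‖x‖) :
    ENNReal.ofReal ((‖x‖ + 2 * t) ^ (α - n) * (|Ω x| - 2 * L * t / ρ))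
      ≤ fracMax n α Ω (dil n t f) x := by
  have hr₀ : (0:ℝ) < ‖x‖ + 2 * t := by positivity
  refine le_trans ?_ (le_iSup₂_of_le (‖x‖ + 2 * t) hr₀ le_rfl)
  have hsub : Function.support (fun y : Eucl n => (‖dil n t f y‖₊ : ℝ≥0∞))
      ⊆ ball x (‖x‖ + 2 * t) := by
    intro y hy
    have hy' : dil n t f y ≠ 0 := by
      intro h
      apply hy
      simp [h]
    have h1 : ‖y‖ ≤ t := dil_norm_le ht hsupp hy'
    rw [mem_ball, dist_eq_norm]
    calc ‖y - x‖ ≤ ‖y‖ + ‖x‖ := norm_sub_le y x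
    _ ≤ t + ‖x‖ := by linarith
    _ < ‖x‖ + 2 * t := by linarith
  have hmass : (∫⁻ y in ball x (‖x‖ + 2 * t), (‖dil n t f y‖₊ : ℝ≥0∞)) = 1 := by
    rw [setLIntegral_eq_of_support_subset hsub]
    exact dil_mass ht hf hpos hnorm
  have hpt : ∀ y : Eucl n, ENNReal.ofReal (|Ω x| - 2 * L * t / ρ) * (‖dil n t f y‖₊ : ℝ≥0∞)
      ≤ (‖Ω (x - y)‖₊ * ‖dil n t f y‖₊ : ℝ≥0∞) := by
    intro y
    by_cases hy : dil n t f y = 0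
    · simp [hy]
    refine mul_le_mul_left ?_ _
    rw [← enorm_eq_nnnorm, ← ofReal_norm, Real.norm_eq_abs]
    apply ENNReal.ofReal_le_ofReal
    have h1 := omega_near hhom hL hL0 hρ ht htρ hx (dil_norm_le ht hsupp hy)
    have h2 := abs_sub_abs_le_abs_sub (Ω x) (Ω (x - y))
    rw [abs_sub_comm] at h1
    linarith
  calc ENNReal.ofReal ((‖x‖ + 2 * t) ^ (α - n) * (|Ω x| - 2 * L * t / ρ))
      = ENNReal.ofReal ((‖x‖ + 2 * t) ^ (α - n)) * ENNReal.ofReal (|Ω x| - 2 * L * t / ρ) := by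
        rw [← ENNReal.ofReal_mul (Real.rpow_nonneg hr₀.le _)]
  _ ≤ ENNReal.ofReal ((‖x‖ + 2 * t) ^ (α - n)) *
        ∫⁻ y in ball x (‖x‖ + 2 * t), (‖Ω (x - y)‖₊ * ‖dil n t f y‖₊ : ℝ≥0∞) := by
        refine mul_le_mul_right ?_ _
        calc ENNReal.ofReal (|Ω x| - 2 * L * t / ρ)
            = ENNReal.ofReal (|Ω x| - 2 * L * t / ρ) *
              ∫⁻ y in ball x (‖x‖ + 2 * t), (‖dil n t f y‖₊ : ℝ≥0∞) := by rw [hmass, mul_one]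
        _ = ∫⁻ y in ball x (‖x‖ + 2 * t),
              ENNReal.ofReal (|Ω x| - 2 * L * t / ρ) * (‖dil n t f y‖₊ : ℝ≥0∞) := by
            rw [lintegral_const_mul' _ _ ENNReal.ofReal_ne_top]
        _ ≤ _ := lintegral_mono hpt

noncomputable def Efun (B L ρ α : ℝ) (n : ℕ) (t : ℝ) : ℝ :=
  B * ((1 - t / ρ) ^ (α - n) - (1 + 2 * (t / ρ)) ^ (α - n))
    + (2 * L * t / ρ) * (1 - t / ρ) ^ (α - n)

lemma ofReal_sub_le (p q : ℝ) : ENNReal.ofReal p - ENNReal.ofReal q ≤ ENNReal.ofReal (p - q) := by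
  rcases le_or_gt 0 q with h | h
  · rw [← ENNReal.ofReal_sub _ h]
  · rw [ENNReal.ofReal_of_nonpos h.le, tsub_zero]
    exact ENNReal.ofReal_le_ofReal (by linarith)

lemma g_eq {n : ℕ} {α : ℝ} {Ω : Eucl n → ℝ} {x : Eucl n} (hx : x ≠ 0) :
    (‖Ω x‖₊ : ℝ≥0∞) / (‖x‖₊ : ℝ≥0∞) ^ ((n:ℝ) - α)
      = ENNReal.ofReal (|Ω x| * ‖x‖ ^ (α - n)) := by
  have h0 : (0:ℝ) < ‖x‖ := norm_pos_iff.mpr hx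
  have e1 : (‖Ω x‖₊ : ℝ≥0∞) = ENNReal.ofReal |Ω x| := by
    rw [← enorm_eq_nnnorm, ← ofReal_norm, Real.norm_eq_abs]
  have e2 : ((‖x‖₊ : ℝ≥0∞)) ^ ((n:ℝ) - α) = ENNReal.ofReal (‖x‖ ^ ((n:ℝ) - α)) := by
    rw [← enorm_eq_nnnorm, ← ofReal_norm]
    exact ENNReal.ofReal_rpow_of_pos h0
  rw [e1, e2, ← ENNReal.ofReal_div_of_pos (Real.rpow_pos_of_pos h0 _)]
  congr 1
  rw [div_eq_mul_inv, ← Real.rpow_neg h0.le, neg_sub]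

lemma ediff_pt {n : ℕ} {α : ℝ} (hα : 0 < α) (hαn : α < n) {Ω : Eucl n → ℝ} (hhom : Homog n Ω)
    {B L : ℝ} (hB0 : 0 ≤ B) (hL0 : 0 ≤ L)
    (hB : ∀ u ∈ sphere (0 : Eucl n) 1, |Ω u| ≤ B)
    (hL : ∀ u ∈ sphere (0 : Eucl n) 1, ∀ v ∈ sphere (0 : Eucl n) 1,
      |Ω u - Ω v| ≤ L * ‖u - v‖)
    {f : Eucl n → ℝ} (hf : Integrable f) (hpos : ∀ y, 0 ≤ f y)
    (hsupp : Function.support f ⊆ closedBall (0 : Eucl n) 1)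
    (hnorm : (∫ y, f y) = 1)
    {ρ t : ℝ} (hρ : 0 < ρ) (ht : 0 < t) (htρ : t ≤ ρ / 2)
    {x : Eucl n} (hx : ρ ≤ ‖x‖) :
    ediff (fracMax n α Ω (dil n t f) x) ((‖Ω x‖₊ : ℝ≥0∞) / (‖x‖₊ : ℝ≥0∞) ^ ((n:ℝ) - α))
      ≤ ENNReal.ofReal (Efun B L ρ α n t * ‖x‖ ^ (α - n)) := by
  have hr0 : (0:ℝ) < ‖x‖ := lt_of_lt_of_le hρ hx
  have hx0 : x ≠ 0 := fun h => by rw [h, norm_zero] at hr0; exact lt_irrefl 0 hr0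
  set r : ℝ := ‖x‖ with hrdef
  set a : ℝ := α - n with hadef
  set w : ℝ := |Ω x| with hwdef
  set c : ℝ := 2 * L * t / ρ with hcdef
  set s : ℝ := t / ρ with hsdef
  have ha : a ≤ 0 := by simp only [hadef]; have : α < (n:ℝ) := hαn; linarith
  have hs0 : 0 < s := div_pos ht hρ
  have hs2 : s ≤ 1 / 2 := by
    rw [hsdef, div_le_div_iff₀ hρ (by norm_num : (0:ℝ) < 2)]
    linarith
  have hs1 : (0:ℝ) < 1 - s := by linarith
  have hrt : (0:ℝ) < r - t := by
    have h' : t < ρ := by linarith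
    linarith
  have hc : 0 ≤ c := by positivity
  have hw0 : 0 ≤ w := abs_nonneg _
  have hwB : w ≤ B := omega_bound hhom hB hx0
  have htr : t ≤ s * r := by
    rw [hsdef, div_mul_eq_mul_div, le_div_iff₀ hρ]
    nlinarith
  have key1 : (1 - s) * r ≤ r - t := by nlinarith
  have key2 : r + 2 * t ≤ (1 + 2 * s) * r := by nlinarith
  have h1s : (0:ℝ) < (1 - s) * r := by positivity
  have F1 : (r - t) ^ a ≤ (1 - s) ^ a * r ^ a := by
    rw [← Real.mul_rpow hs1.le hr0.le]
    exact Real.rpow_le_rpow_of_nonpos h1s key1 ha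
  have F2 : (1 + 2 * s) ^ a * r ^ a ≤ (r + 2 * t) ^ a := by
    rw [← Real.mul_rpow (by linarith) hr0.le]
    exact Real.rpow_le_rpow_of_nonpos (by linarith) key2 ha
  have F3 : (1:ℝ) ≤ (1 - s) ^ a := by
    have := Real.rpow_le_rpow_of_nonpos hs1 (by linarith : 1 - s ≤ 1) ha
    rwa [Real.one_rpow] at this
  have F4 : (1 + 2 * s) ^ a ≤ 1 := by
    have := Real.rpow_le_rpow_of_nonpos one_pos (by linarith : (1:ℝ) ≤ 1 + 2 * s) ha
    rwa [Real.one_rpow] at this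
  have F6 : (r + 2 * t) ^ a ≤ r ^ a :=
    Real.rpow_le_rpow_of_nonpos hr0 (by linarith) ha
  have hra : (0:ℝ) < r ^ a := Real.rpow_pos_of_pos hr0 _
  have hE : Efun B L ρ α n t = B * ((1 - s) ^ a - (1 + 2 * s) ^ a) + c * (1 - s) ^ a := rfl
  -- real upper bound
  have upperReal : (r - t) ^ a * (w + c) - w * r ^ a ≤ Efun B L ρ α n t * r ^ a := by
    have u1 : (r - t) ^ a * (w + c) ≤ (1 - s) ^ a * r ^ a * (w + c) :=
      mul_le_mul_of_nonneg_right F1 (by positivity)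
    have g1 : w * ((1 - s) ^ a - 1) ≤ B * ((1 - s) ^ a - 1) :=
      mul_le_mul_of_nonneg_right hwB (by linarith)
    have g2 : B * ((1 - s) ^ a - 1) ≤ B * ((1 - s) ^ a - (1 + 2 * s) ^ a) :=
      mul_le_mul_of_nonneg_left (by linarith) hB0
    have inner : (1 - s) ^ a * (w + c) - w ≤ Efun B L ρ α n t := by
      rw [hE]; nlinarith
    calc (r - t) ^ a * (w + c) - w * r ^ a ≤ (1 - s) ^ a * r ^ a * (w + c) - w * r ^ a := by
          linarith
    _ = r ^ a * ((1 - s) ^ a * (w + c) - w) := by ring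
    _ ≤ r ^ a * Efun B L ρ α n t := mul_le_mul_of_nonneg_left inner hra.le
    _ = Efun B L ρ α n t * r ^ a := by ring
  -- real lower bound
  have lowerReal : w * r ^ a - (r + 2 * t) ^ a * (w - c) ≤ Efun B L ρ α n t * r ^ a := by
    rcases le_or_gt c w with hcw | hcw
    · have u2 : (1 + 2 * s) ^ a * r ^ a * (w - c) ≤ (r + 2 * t) ^ a * (w - c) :=
        mul_le_mul_of_nonneg_right F2 (by linarith)
      have g1 : w * (1 - (1 + 2 * s) ^ a) ≤ B * (1 - (1 + 2 * s) ^ a) :=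
        mul_le_mul_of_nonneg_right hwB (by linarith)
      have g2 : B * (1 - (1 + 2 * s) ^ a) ≤ B * ((1 - s) ^ a - (1 + 2 * s) ^ a) :=
        mul_le_mul_of_nonneg_left (by linarith) hB0
      have g3 : c * (1 + 2 * s) ^ a ≤ c * (1 - s) ^ a :=
        mul_le_mul_of_nonneg_left (by linarith) hc
      have inner : w * (1 - (1 + 2 * s) ^ a) + c * (1 + 2 * s) ^ a ≤ Efun B L ρ α n t := by
        rw [hE]; linarith
      calc w * r ^ a - (r + 2 * t) ^ a * (w - c)
          ≤ w * r ^ a - (1 + 2 * s) ^ a * r ^ a * (w - c) := by linarith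
      _ = r ^ a * (w * (1 - (1 + 2 * s) ^ a) + c * (1 + 2 * s) ^ a) := by ring
      _ ≤ r ^ a * Efun B L ρ α n t := mul_le_mul_of_nonneg_left inner hra.le
      _ = Efun B L ρ α n t * r ^ a := by ring
    · have u3 : (r + 2 * t) ^ a * (c - w) ≤ r ^ a * (c - w) :=
        mul_le_mul_of_nonneg_right F6 (by linarith)
      have g3 : c * 1 ≤ c * (1 - s) ^ a := mul_le_mul_of_nonneg_left F3 hc
      have g4 : 0 ≤ B * ((1 - s) ^ a - (1 + 2 * s) ^ a) :=
        mul_nonneg hB0 (by linarith)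
      have inner : c ≤ Efun B L ρ α n t := by rw [hE]; linarith
      calc w * r ^ a - (r + 2 * t) ^ a * (w - c)
          = w * r ^ a + (r + 2 * t) ^ a * (c - w) := by ring
      _ ≤ w * r ^ a + r ^ a * (c - w) := by linarith
      _ = r ^ a * c := by ring
      _ ≤ r ^ a * Efun B L ρ α n t := mul_le_mul_of_nonneg_left inner hra.le
      _ = Efun B L ρ α n t * r ^ a := by ring
  -- assemble in ℝ≥0∞
  have hgG : (‖Ω x‖₊ : ℝ≥0∞) / (‖x‖₊ : ℝ≥0∞) ^ ((n:ℝ) - α) = ENNReal.ofReal (w * r ^ a) := by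
    rw [g_eq hx0]
  have hup := fracMax_upper (le_of_lt hαn) hhom hB hL hL0 hf hpos hsupp hnorm hρ ht htρ hx
  have hlo := fracMax_lower (α := α) hhom hL hL0 hf hpos hsupp hnorm hρ ht htρ hx
  rw [ediff, hgG]
  apply sup_le
  · calc fracMax n α Ω (dil n t f) x - ENNReal.ofReal (w * r ^ a)
        ≤ ENNReal.ofReal ((r - t) ^ a * (w + c)) - ENNReal.ofReal (w * r ^ a) :=
          tsub_le_tsub_right hup _
    _ = ENNReal.ofReal ((r - t) ^ a * (w + c) - w * r ^ a) :=
          (ENNReal.ofReal_sub _ (by positivity)).symm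
    _ ≤ ENNReal.ofReal (Efun B L ρ α n t * r ^ a) := ENNReal.ofReal_le_ofReal upperReal
  · calc ENNReal.ofReal (w * r ^ a) - fracMax n α Ω (dil n t f) x
        ≤ ENNReal.ofReal (w * r ^ a) - ENNReal.ofReal ((r + 2 * t) ^ a * (w - c)) :=
          tsub_le_tsub_left hlo _
    _ ≤ ENNReal.ofReal (w * r ^ a - (r + 2 * t) ^ a * (w - c)) := ofReal_sub_le _ _
    _ ≤ ENNReal.ofReal (Efun B L ρ α n t * r ^ a) := ENNReal.ofReal_le_ofReal lowerReal

lemma eucl_nontrivial {n : ℕ} (hn : n ≠ 0) : Nontrivial (Eucl n) := by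
  have hpos : 0 < n := Nat.pos_of_ne_zero hn
  refine ⟨⟨0, EuclideanSpace.single ⟨0, hpos⟩ 1, fun h => ?_⟩⟩
  have := congrArg (fun v : Eucl n => v ⟨0, hpos⟩) h
  simp [EuclideanSpace.single_apply] at this

lemma wnorm_le {n : ℕ} (hn : n ≠ 0) {α : ℝ} (hα : 0 < α) (hαn : α < n) {ρ : ℝ} (hρ : 0 < ρ)
    {g : Eucl n → ℝ≥0∞} {E : ℝ}
    (hg : ∀ x : Eucl n, ρ ≤ ‖x‖ → g x ≤ ENNReal.ofReal (E * ‖x‖ ^ (α - n))) :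
    wnormSet volume ((n:ℝ)/((n:ℝ)-α)) ((ball (0 : Eucl n) ρ)ᶜ) g
      ≤ ENNReal.ofReal E * (volume (ball (0:Eucl n) 1)) ^ (((n:ℝ) - α)/n) := by
  haveI := eucl_nontrivial hn
  have hnα : (0:ℝ) < (n:ℝ) - α := by
    have : α < (n:ℝ) := hαn
    linarith
  have hn0 : (0:ℝ) < (n:ℝ) := lt_trans hα hαn
  have hq : 1 / ((n:ℝ)/((n:ℝ)-α)) = ((n:ℝ) - α)/n := one_div_div _ _
  have he0 : 0 ≤ ((n:ℝ) - α)/n := by positivity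
  refine iSup_le fun l => ?_
  by_cases hl : l = 0
  · simp [hl]
  have hlpos : (0:ℝ) < (l : ℝ) := by
    have := pos_iff_ne_zero.mpr hl
    exact_mod_cast this
  have memA : ∀ x : Eucl n, x ∈ (ball (0 : Eucl n) ρ)ᶜ → ρ ≤ ‖x‖ := by
    intro x hxA
    rw [mem_compl_iff, mem_ball, dist_zero_right, not_lt] at hxA
    exact hxA
  by_cases hE : E ≤ 0
  · have hempty : {x | x ∈ (ball (0 : Eucl n) ρ)ᶜ ∧ (l : ℝ≥0∞) < g x} = ∅ := by
      ext x
      simp only [mem_setOf_eq, mem_empty_iff_false, iff_false, not_and]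
      intro hxA hlt
      have hxρ := memA x hxA
      have h0 : E * ‖x‖ ^ (α - n) ≤ 0 :=
        mul_nonpos_iff.mpr (Or.inr ⟨hE, Real.rpow_nonneg (norm_nonneg _) _⟩)
      have := lt_of_lt_of_le hlt ((hg x hxρ).trans (by
        rw [ENNReal.ofReal_of_nonpos h0]))
      exact (not_lt_of_ge zero_le) this
    rw [hempty]
    simp only [measure_empty]
    rw [ENNReal.zero_rpow_of_pos (by rw [hq]; positivity), mul_zero]
    exact zero_le
  push_neg at hE
  set R : ℝ := (E / l) ^ (1 / ((n:ℝ) - α)) with hRdef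
  have hEl : (0:ℝ) < E / l := div_pos hE hlpos
  have hR : 0 < R := Real.rpow_pos_of_pos hEl _
  have hsub : {x | x ∈ (ball (0 : Eucl n) ρ)ᶜ ∧ (l : ℝ≥0∞) < g x} ⊆ ball (0 : Eucl n) R := by
    rintro x ⟨hxA, hlt⟩
    have hxρ := memA x hxA
    have hx0 : (0:ℝ) < ‖x‖ := lt_of_lt_of_le hρ hxρ
    have hlt2 : (l : ℝ≥0∞) < ENNReal.ofReal (E * ‖x‖ ^ (α - n)) := lt_of_lt_of_le hlt (hg x hxρ)
    have hlt3 : (l : ℝ) < E * ‖x‖ ^ (α - n) := by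
      rw [← ENNReal.ofReal_coe_nnreal] at hlt2
      exact (ENNReal.ofReal_lt_ofReal_iff_of_nonneg l.coe_nonneg).mp hlt2
    have hpow : (0:ℝ) < ‖x‖ ^ ((n:ℝ) - α) := Real.rpow_pos_of_pos hx0 _
    have hinv : ‖x‖ ^ (α - (n:ℝ)) = (‖x‖ ^ ((n:ℝ) - α))⁻¹ := by
      rw [← Real.rpow_neg hx0.le, neg_sub]
    rw [hinv, ← div_eq_mul_inv, lt_div_iff₀ hpow] at hlt3
    have hlt4 : ‖x‖ ^ ((n:ℝ) - α) < E / l := by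
      rw [lt_div_iff₀ hlpos]
      linarith [hlt3]
    have hlt5 : (‖x‖ ^ ((n:ℝ) - α)) ^ (1 / ((n:ℝ) - α)) < R :=
      Real.rpow_lt_rpow (Real.rpow_nonneg (norm_nonneg _) _) hlt4 (by positivity)
    rw [← Real.rpow_mul hx0.le, mul_one_div_cancel hnα.ne', Real.rpow_one] at hlt5
    rwa [mem_ball, dist_zero_right]
  have hballR : volume (ball (0 : Eucl n) R)
      = ENNReal.ofReal (R ^ n) * volume (ball (0 : Eucl n) 1) := by
    rw [Measure.addHaar_ball _ _ hR.le, finrank_euclideanSpace_fin]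
  have hRn : ENNReal.ofReal (R ^ n) ^ (((n:ℝ) - α)/n) = ENNReal.ofReal E / (l : ℝ≥0∞) := by
    rw [← Real.rpow_natCast R n, ENNReal.ofReal_rpow_of_pos (Real.rpow_pos_of_pos hR _),
      ← Real.rpow_mul hR.le]
    have : (n:ℝ) * (((n:ℝ) - α)/n) = (n:ℝ) - α := by field_simp
    rw [this, hRdef, ← Real.rpow_mul hEl.le, one_div_mul_cancel hnα.ne', Real.rpow_one,
      ENNReal.ofReal_div_of_pos hlpos, ENNReal.ofReal_coe_nnreal]
  calc (l : ℝ≥0∞) * (volume {x | x ∈ (ball (0 : Eucl n) ρ)ᶜ ∧ (l : ℝ≥0∞) < g x}) ^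
        (1 / ((n:ℝ)/((n:ℝ)-α)))
      ≤ (l : ℝ≥0∞) * (volume (ball (0 : Eucl n) R)) ^ (((n:ℝ) - α)/n) := by
        rw [hq]
        exact mul_le_mul_right (ENNReal.rpow_le_rpow (measure_mono hsub) he0) _
  _ = (l : ℝ≥0∞) * ((ENNReal.ofReal E / (l : ℝ≥0∞)) *
        (volume (ball (0 : Eucl n) 1)) ^ (((n:ℝ) - α)/n)) := by
        rw [hballR, ENNReal.mul_rpow_of_nonneg _ _ he0, hRn]
  _ = ENNReal.ofReal E * (volume (ball (0:Eucl n) 1)) ^ (((n:ℝ) - α)/n) := by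
        rw [← mul_assoc, ENNReal.mul_div_cancel (by exact_mod_cast hl) ENNReal.coe_ne_top]

theorem stmt14 (n : ℕ) (α : ℝ) (hα : 0 < α) (hαn : α < n)
    (Ω : Eucl n → ℝ) (B L : ℝ) (hmeas : Measurable Ω) (hhom : Homog n Ω)
    (hB : ∀ u ∈ sphere (0 : Eucl n) 1, |Ω u| ≤ B)
    (hL : ∀ u ∈ sphere (0 : Eucl n) 1, ∀ v ∈ sphere (0 : Eucl n) 1,
      |Ω u - Ω v| ≤ L * ‖u - v‖)
    (f : Eucl n → ℝ) (hf : Integrable f) (hpos : ∀ y, 0 ≤ f y)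
    (hsupp : Function.support f ⊆ closedBall (0 : Eucl n) 1)
    (hnorm : (∫ y, f y) = 1) :
    ∀ ρ > (0:ℝ),
      Tendsto (fun t : ℝ => wnormSet volume ((n:ℝ)/((n:ℝ)-α)) ((ball (0 : Eucl n) ρ)ᶜ)
          (fun x => ediff (fracMax n α Ω (dil n t f) x)
            ((‖Ω x‖₊ : ℝ≥0∞) / (‖x‖₊ : ℝ≥0∞) ^ ((n:ℝ) - α))))
        (nhdsWithin 0 (Ioi 0)) (nhds 0) := by
  intro ρ hρ
  have hn : n ≠ 0 := by
    intro h
    rw [h] at hαn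
    norm_num at hαn
    linarith
  have hn0 : (0:ℝ) < (n:ℝ) := lt_trans hα hαn
  have hnα : (0:ℝ) < (n:ℝ) - α := by
    have : α < (n:ℝ) := hαn
    linarith
  have hB0 : (0:ℝ) ≤ max B 0 := le_max_right _ _
  have hL0 : (0:ℝ) ≤ max L 0 := le_max_right _ _
  have hB' : ∀ u ∈ sphere (0 : Eucl n) 1, |Ω u| ≤ max B 0 :=
    fun u hu => (hB u hu).trans (le_max_left _ _)
  have hL' : ∀ u ∈ sphere (0 : Eucl n) 1, ∀ v ∈ sphere (0 : Eucl n) 1,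
      |Ω u - Ω v| ≤ max L 0 * ‖u - v‖ :=
    fun u hu v hv => (hL u hu v hv).trans
      (mul_le_mul_of_nonneg_right (le_max_left _ _) (norm_nonneg _))
  set C : ℝ≥0∞ := (volume (ball (0:Eucl n) 1)) ^ (((n:ℝ) - α)/n) with hC
  have hCtop : C ≠ ∞ :=
    ENNReal.rpow_ne_top_of_nonneg (by positivity) measure_ball_lt_top.ne
  -- limit of the bounding function
  have t1 : Tendsto (fun t : ℝ => 1 - t/ρ) (nhds 0) (nhds 1) := by
    have hc : Continuous (fun t : ℝ => 1 - t/ρ) := by fun_prop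
    simpa using hc.tendsto 0
  have t2 : Tendsto (fun t : ℝ => 1 + 2 * (t/ρ)) (nhds 0) (nhds 1) := by
    have hc : Continuous (fun t : ℝ => 1 + 2 * (t/ρ)) := by fun_prop
    simpa using hc.tendsto 0
  have t1' : Tendsto (fun t : ℝ => (1 - t/ρ) ^ (α - (n:ℝ))) (nhds 0) (nhds 1) := by
    have h := t1.rpow (tendsto_const_nhds (x := α - (n:ℝ))) (Or.inl one_ne_zero)
    simpa using h
  have t2' : Tendsto (fun t : ℝ => (1 + 2 * (t/ρ)) ^ (α - (n:ℝ))) (nhds 0) (nhds 1) := by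
    have h := t2.rpow (tendsto_const_nhds (x := α - (n:ℝ))) (Or.inl one_ne_zero)
    simpa using h
  have t3 : Tendsto (fun t : ℝ => 2 * max L 0 * t / ρ) (nhds 0) (nhds 0) := by
    have hc : Continuous (fun t : ℝ => 2 * max L 0 * t / ρ) := by fun_prop
    simpa using hc.tendsto 0
  have hE0 : Tendsto (fun t : ℝ => Efun (max B 0) (max L 0) ρ α n t) (nhds 0) (nhds 0) := by
    have h := (tendsto_const_nhds (x := max B 0)).mul (t1'.sub t2') |>.add (t3.mul t1')
    simpa [Efun] using h
  have hlim : Tendsto (fun t : ℝ => ENNReal.ofReal (Efun (max B 0) (max L 0) ρ α n t) * C)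
      (nhdsWithin (0:ℝ) (Ioi 0)) (nhds 0) := by
    have h1 : Tendsto (fun t : ℝ => ENNReal.ofReal (Efun (max B 0) (max L 0) ρ α n t))
        (nhds 0) (nhds 0) := by
      have h := ENNReal.tendsto_ofReal hE0
      simpa using h
    have h2 := ENNReal.Tendsto.mul_const h1 (Or.inr hCtop)
    rw [zero_mul] at h2
    exact h2.mono_left nhdsWithin_le_nhds
  refine tendsto_of_tendsto_of_tendsto_of_le_of_le' tendsto_const_nhds hlim
    (Eventually.of_forall fun t => zero_le) ?_
  filter_upwards [Ioo_mem_nhdsGT_of_mem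
    (show (0:ℝ) ∈ Ico 0 (ρ/2) from ⟨le_refl 0, by linarith⟩)] with t ht
  exact wnorm_le hn hα hαn hρ fun x hx =>
    ediff_pt hα hαn hhom hB0 hL0 hB' hL' hf hpos hsupp hnorm hρ ht.1 ht.2.le hx

end
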